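/- Let X ∈ ℝ^{d×n}. Then min over W ∈ ℝ^{d×d} with rank(W) ≤ k of ‖Wᵀ X − X‖_F² equals min over A ∈ ℝ^{d×k} with AᵀA = I_k of ‖A Aᵀ X − X‖_F². -/

import Mathlib

open Matrix

/-- squared Frobenius norm -/
noncomputable def frobSq {d n : ℕ} (M : Matrix (Fin d) (Fin n) ℝ) : ℝ :=
  ∑ i, ∑ j, (M i j) ^ 2

namespace Stmt7Aux

open Module
open scoped RealInnerProductSpace

lemma frobSq_nonneg {d n : ℕ} (M : Matrix (Fin d) (Fin n) ℝ) : 0 ≤ frobSq M :=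
  Finset.sum_nonneg fun _ _ => Finset.sum_nonneg fun _ _ => sq_nonneg _

lemma frobSq_col {d n : ℕ} (M : Matrix (Fin d) (Fin n) ℝ) :
    frobSq M = ∑ j : Fin n,
      ‖(WithLp.equiv 2 (Fin d → ℝ)).symm (fun i => M i j)‖ ^ 2 := by
  rw [frobSq, Finset.sum_comm]
  refine Finset.sum_congr rfl fun j _ => ?_
  rw [EuclideanSpace.norm_eq, Real.sq_sqrt (Finset.sum_nonneg fun _ _ => sq_nonneg _)]
  simp [Real.norm_eq_abs, sq_abs]

lemma key {d n k : ℕ} (hk : k ≤ d) (X : Matrix (Fin d) (Fin n) ℝ)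
    (W : Matrix (Fin d) (Fin d) ℝ) (hW : W.rank ≤ k) :
    ∃ A : Matrix (Fin d) (Fin k) ℝ, Aᵀ * A = 1 ∧
      frobSq (A * Aᵀ * X - X) ≤ frobSq (Wᵀ * X - X) := by
  classical
  let T : EuclideanSpace ℝ (Fin d) →ₗ[ℝ] EuclideanSpace ℝ (Fin d) :=
    Matrix.toEuclideanLin Wᵀ
  let V₀ : Submodule ℝ (EuclideanSpace ℝ (Fin d)) := LinearMap.range T
  have h1 : Wᵀ.rank = finrank ℝ V₀ :=
    Matrix.rank_eq_finrank_range_toLin Wᵀ (PiLp.basisFun 2 ℝ (Fin d))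
      (PiLp.basisFun 2 ℝ (Fin d))
  have hrk : finrank ℝ V₀ ≤ k := by
    rw [← h1, Matrix.rank_transpose]; exact hW
  set r := finrank ℝ V₀ with hr
  let b₀ : OrthonormalBasis (Fin r) ℝ V₀ := stdOrthonormalBasis ℝ V₀
  let v : Fin d → EuclideanSpace ℝ (Fin d) := fun i => if h : (i : ℕ) < r then (b₀ ⟨i, h⟩ : EuclideanSpace ℝ (Fin d)) else 0
  have hv : Orthonormal ℝ (Set.restrict {i : Fin d | (i : ℕ) < r} v) := by
    rw [orthonormal_iff_ite]
    rintro ⟨i, hi⟩ ⟨j, hj⟩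
    have hi' : (i : ℕ) < r := hi
    have hj' : (j : ℕ) < r := hj
    have hbo := orthonormal_iff_ite.mp b₀.orthonormal ⟨i, hi'⟩ ⟨j, hj'⟩
    simp only [Set.restrict_apply, v, dif_pos hi', dif_pos hj']
    change ⟪v i, v j⟫ = _
    simp only [v, dif_pos hi', dif_pos hj']
    rw [← Submodule.coe_inner, hbo]
    simp [Fin.ext_iff, Subtype.ext_iff]
  have hcard : finrank ℝ (EuclideanSpace ℝ (Fin d)) = Fintype.card (Fin d) := by
    simp [finrank_euclideanSpace]
  obtain ⟨b, hb⟩ := hv.exists_orthonormalBasis_extension_of_card_eq hcard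
  let c : Fin k → Fin d := Fin.castLE hk
  have hcinj : Function.Injective c := Fin.castLE_injective hk
  have hbc : ∀ i j : Fin k, ⟪b (c i), b (c j)⟫ = if i = j then 1 else 0 := by
    intro i j
    rw [orthonormal_iff_ite.mp b.orthonormal (c i) (c j)]
    simp [hcinj.eq_iff]
  let A : Matrix (Fin d) (Fin k) ℝ := fun i j => b (c j) i
  have hA : Aᵀ * A = 1 := by
    ext i j
    have h2 : (∑ l, b (c i) l * b (c j) l) = if i = j then 1 else 0 := by
      rw [← hbc i j, PiLp.inner_apply]
      simp [RCLike.inner_apply, conj_trivial, mul_comm]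
    rw [Matrix.mul_apply, Matrix.one_apply]
    exact h2
  let P : EuclideanSpace ℝ (Fin d) → EuclideanSpace ℝ (Fin d) := fun x => ∑ m : Fin k, ⟪b (c m), x⟫ • b (c m)
  have hPo : ∀ (x : EuclideanSpace ℝ (Fin d)) (m : Fin k), ⟪b (c m), x - P x⟫ = 0 := by
    intro x m
    rw [inner_sub_right]
    have hPx : ⟪b (c m), P x⟫ = ⟪b (c m), x⟫ := by
      show ⟪b (c m), ∑ l : Fin k, ⟪b (c l), x⟫ • b (c l)⟫ = _
      rw [inner_sum]
      rw [Finset.sum_eq_single m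
        (fun l _ hlm => by
          rw [real_inner_smul_right, hbc m l, if_neg fun h => hlm h.symm, mul_zero])
        (by simp)]
      rw [real_inner_smul_right, hbc m m, if_pos rfl, mul_one]
    rw [hPx, sub_self]
  have hkey : ∀ y z : EuclideanSpace ℝ (Fin d), (∀ m : Fin k, ⟪y, b (c m)⟫ = 0) → ⟪y, P z⟫ = 0 := by
    intro y z hy
    show ⟪y, ∑ m : Fin k, ⟪b (c m), z⟫ • b (c m)⟫ = 0
    rw [inner_sum]
    exact Finset.sum_eq_zero fun m _ => by
      rw [real_inner_smul_right, hy m, mul_zero]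
  have hb₀c : ∀ i : Fin r, (b₀ i : EuclideanSpace ℝ (Fin d)) = b (c ⟨(i : ℕ), lt_of_lt_of_le i.2 hrk⟩) := by
    intro i
    have hir : (i : ℕ) < r := i.2
    have hmem : ((c ⟨(i : ℕ), lt_of_lt_of_le i.2 hrk⟩ : Fin d) : ℕ) < r := hir
    rw [hb _ hmem]
    simp only [v]
    rw [dif_pos hmem]
    congr 1
  have horth : ∀ (x w : EuclideanSpace ℝ (Fin d)), w ∈ V₀ → ⟪x - P x, w⟫ = 0 := by
    intro x w hw
    have hy : ∀ m : Fin k, ⟪x - P x, b (c m)⟫ = 0 := fun m => by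
      rw [real_inner_comm]; exact hPo x m
    have hrepr : w = ∑ i : Fin r, b₀.repr ⟨w, hw⟩ i • (b₀ i : EuclideanSpace ℝ (Fin d)) := by
      have h3 := congrArg (Subtype.val) (b₀.sum_repr ⟨w, hw⟩)
      simpa using h3.symm
    rw [hrepr, inner_sum]
    refine Finset.sum_eq_zero fun i _ => ?_
    rw [real_inner_smul_right, hb₀c i, hy, mul_zero]
  have hpyth : ∀ (x w : EuclideanSpace ℝ (Fin d)), w ∈ V₀ → ‖P x - x‖ ^ 2 ≤ ‖w - x‖ ^ 2 := by
    intro x w hw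
    have hy : ∀ m : Fin k, ⟪x - P x, b (c m)⟫ = 0 := fun m => by
      rw [real_inner_comm]; exact hPo x m
    have h0 : ⟪x - P x, P x - w⟫ = 0 := by
      rw [inner_sub_right, hkey (x - P x) x hy, horth x w hw, sub_self]
    have hexp : ‖w - x‖ ^ 2 = ‖w - P x‖ ^ 2 + 2 * ⟪w - P x, P x - x⟫
        + ‖P x - x‖ ^ 2 := by
      have h4 : w - x = (w - P x) + (P x - x) := by abel
      rw [h4, norm_add_sq_real]
    have hz : ⟪w - P x, P x - x⟫ = 0 := by
      calc ⟪w - P x, P x - x⟫ = ⟪-(P x - w), -(x - P x)⟫ := by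
            congr 1 <;> abel
        _ = ⟪P x - w, x - P x⟫ := inner_neg_neg _ _
        _ = ⟪x - P x, P x - w⟫ := real_inner_comm _ _
        _ = 0 := h0
    rw [hexp, hz]
    nlinarith [sq_nonneg ‖w - P x‖]
  let xcol : Fin n → EuclideanSpace ℝ (Fin d) := fun j => (WithLp.equiv 2 (Fin d → ℝ)).symm (fun i => X i j)
  have hsum_apply : ∀ (f : Fin k → EuclideanSpace ℝ (Fin d)) (i : Fin d), (∑ m, f m) i = ∑ m, f m i :=
    fun f i => by rw [WithLp.ofLp_sum, Finset.sum_apply]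
  have hPapp : ∀ (j : Fin n) (i : Fin d),
      (P (xcol j)) i = ∑ m : Fin k, (∑ l, b (c m) l * X l j) * b (c m) i := by
    intro j i
    show (∑ m : Fin k, ⟪b (c m), xcol j⟫ • b (c m)) i = _
    rw [hsum_apply]
    refine Finset.sum_congr rfl fun m _ => ?_
    have h5 : ⟪b (c m), xcol j⟫ = ∑ l, b (c m) l * X l j := by
      rw [PiLp.inner_apply]
      simp [RCLike.inner_apply, conj_trivial, xcol, mul_comm]
    rw [h5]
    rfl
  have colA : ∀ j : Fin n,
      (WithLp.equiv 2 (Fin d → ℝ)).symm (fun i => (A * Aᵀ * X - X) i j)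
        = P (xcol j) - xcol j := by
    intro j
    rw [Equiv.symm_apply_eq]
    funext i
    have h6 : (A * Aᵀ * X) i j
        = ∑ m : Fin k, (∑ l, b (c m) l * X l j) * b (c m) i := by
      simp only [Matrix.mul_apply]
      calc ∑ l, (∑ m, A i m * A l m) * X l j
          = ∑ l, ∑ m, A i m * A l m * X l j :=
            Finset.sum_congr rfl fun l _ => Finset.sum_mul _ _ _
        _ = ∑ m, ∑ l, A i m * A l m * X l j := Finset.sum_comm
        _ = ∑ m : Fin k, (∑ l, b (c m) l * X l j) * b (c m) i := by
            refine Finset.sum_congr rfl fun m _ => ?_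
            rw [Finset.sum_mul]
            exact Finset.sum_congr rfl fun l _ => by show A i m * A l m * X l j = _; ring
    show (A * Aᵀ * X - X) i j = (P (xcol j) - xcol j) i
    have h7 : (P (xcol j) - xcol j) i = P (xcol j) i - xcol j i := rfl
    have h8 : xcol j i = X i j := rfl
    rw [Matrix.sub_apply, h7, h8, hPapp j i, h6]
  have colW : ∀ j : Fin n,
      (WithLp.equiv 2 (Fin d → ℝ)).symm (fun i => (Wᵀ * X - X) i j)
        = T (xcol j) - xcol j := by
    intro j
    rw [Equiv.symm_apply_eq]
    funext i
    show (Wᵀ * X - X) i j = (T (xcol j) - xcol j) i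
    have h9 : T (xcol j) = (WithLp.equiv 2 (Fin d → ℝ)).symm
        (Wᵀ *ᵥ fun l => X l j) :=
      Matrix.toEuclideanLin_apply_piLp_toLp Wᵀ _
    have h10 : (T (xcol j) - xcol j) i = T (xcol j) i - xcol j i := rfl
    rw [Matrix.sub_apply, h10, h9]
    have h11 : ((WithLp.equiv 2 (Fin d → ℝ)).symm (Wᵀ *ᵥ fun l => X l j)) i
        = ∑ l, Wᵀ i l * X l j := rfl
    rw [h11]
    rfl
  refine ⟨A, hA, ?_⟩
  rw [frobSq_col, frobSq_col]
  refine Finset.sum_le_sum fun j _ => ?_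
  rw [colA j, colW j]
  exact hpyth (xcol j) (T (xcol j)) (LinearMap.mem_range_self T _)

end Stmt7Aux

/-- minimizing `‖Wᵀ X − X‖_F²` over `W ∈ ℝ^{d×d}` with `rank W ≤ k`
equals minimizing `‖A Aᵀ X − X‖_F²` over `A ∈ ℝ^{d×k}` with `AᵀA = I_k`. -/
theorem stmt_7 (d n k : ℕ) (hk : k ≤ d) (X : Matrix (Fin d) (Fin n) ℝ) :
    sInf {y : ℝ | ∃ W : Matrix (Fin d) (Fin d) ℝ,
        W.rank ≤ k ∧ y = frobSq (Wᵀ * X - X)} =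
    sInf {y : ℝ | ∃ A : Matrix (Fin d) (Fin k) ℝ,
        Aᵀ * A = 1 ∧ y = frobSq (A * Aᵀ * X - X)} := by
  set S1 := {y : ℝ | ∃ W : Matrix (Fin d) (Fin d) ℝ,
      W.rank ≤ k ∧ y = frobSq (Wᵀ * X - X)} with hS1
  set S2 := {y : ℝ | ∃ A : Matrix (Fin d) (Fin k) ℝ,
      Aᵀ * A = 1 ∧ y = frobSq (A * Aᵀ * X - X)} with hS2
  have hzero : (0 : Matrix (Fin d) (Fin d) ℝ).rank ≤ k := by
    simp [Matrix.rank_zero]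
  have ne1 : S1.Nonempty := ⟨_, 0, hzero, rfl⟩
  obtain ⟨A₀, hA₀, -⟩ := Stmt7Aux.key hk X 0 hzero
  have ne2 : S2.Nonempty := ⟨_, A₀, hA₀, rfl⟩
  have bdd1 : BddBelow S1 := ⟨0, by rintro y ⟨Wy, -, rfl⟩; exact Stmt7Aux.frobSq_nonneg _⟩
  have bdd2 : BddBelow S2 := ⟨0, by rintro y ⟨Ay, -, rfl⟩; exact Stmt7Aux.frobSq_nonneg _⟩
  refine le_antisymm ?_ ?_
  · refine csInf_le_csInf bdd1 ne2 ?_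
    rintro y ⟨A, hA, rfl⟩
    refine ⟨A * Aᵀ, ?_, ?_⟩
    · calc (A * Aᵀ).rank ≤ A.rank := Matrix.rank_mul_le_left A Aᵀ
        _ ≤ Fintype.card (Fin k) := Matrix.rank_le_card_width A
        _ = k := Fintype.card_fin k
    · rw [Matrix.transpose_mul, Matrix.transpose_transpose]
  · refine le_csInf ne1 ?_
    rintro y ⟨W, hW, rfl⟩
    obtain ⟨A, hA, hle⟩ := Stmt7Aux.key hk X W hW
    exact le_trans (csInf_le bdd2 ⟨A, hA, rfl⟩) hle
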